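/- If f : ℝ → ℝ is continuous and has a periodic point y₀ of period n+1 ≥ 3 whose orbit satisfies y₀ < y₁ < ⋯ < y_n (type L(n+1)), then f has a periodic point z₀ of period n whose orbit satisfies z₀ < z₁ < ⋯ < z_{n-1} (type L(n)). -/
import Mathlib

-- exact pullback of an interval, given preimage points with p ≤ q
lemma aux_pull (f : ℝ → ℝ) (hf : Continuous f) {a b c d p q : ℝ}
    (hp : p ∈ Set.Icc a b) (hq : q ∈ Set.Icc a b) (hpq : p ≤ q)
    (hfp : f p = c) (hfq : f q = d) (hcd : c ≤ d) :
    ∃ l r, a ≤ l ∧ l ≤ r ∧ r ≤ b ∧ f '' Set.Icc l r = Set.Icc c d := by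
  set T := Set.Icc a q ∩ f ⁻¹' {c} with hT
  have hTc : IsCompact T := isCompact_Icc.inter_right (isClosed_singleton.preimage hf)
  have hTne : T.Nonempty := ⟨p, ⟨hp.1, hpq⟩, hfp⟩
  set l := sSup T with hl
  have hlT : l ∈ T := hTc.sSup_mem hTne
  have hfl : f l = c := hlT.2
  have hlq : l ≤ q := hlT.1.2
  have hal : a ≤ l := hlT.1.1
  set S := Set.Icc l q ∩ f ⁻¹' {d} with hS
  have hSc : IsCompact S := isCompact_Icc.inter_right (isClosed_singleton.preimage hf)
  have hSne : S.Nonempty := ⟨q, ⟨hlq, le_refl q⟩, hfq⟩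
  set r := sInf S with hr
  have hrS : r ∈ S := hSc.sInf_mem hSne
  have hfr : f r = d := hrS.2
  have hlr : l ≤ r := hrS.1.1
  have hrq : r ≤ q := hrS.1.2
  refine ⟨l, r, hal, hlr, hrq.trans hq.2, Set.Subset.antisymm ?_ ?_⟩
  · rintro _ ⟨x, hx, rfl⟩
    constructor
    · by_contra hlt
      push_neg at hlt
      have hxl : l < x := by
        rcases lt_or_eq_of_le hx.1 with h | h
        · exact h
        · exfalso; rw [← h, hfl] at hlt; exact absurd hlt (lt_irrefl c)
      have : c ∈ Set.Icc (f x) (f r) := ⟨le_of_lt hlt, by rw [hfr]; exact hcd⟩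
      obtain ⟨x', hx', hfx'⟩ := intermediate_value_Icc hx.2 hf.continuousOn this
      have hx'T : x' ∈ T := ⟨⟨hal.trans (hxl.le.trans hx'.1), hx'.2.trans hrq⟩, hfx'⟩
      have : x' ≤ l := le_csSup hTc.bddAbove hx'T
      have : x < x' + 1 := by nlinarith [hx'.1]
      linarith [hx'.1]
    · by_contra hlt
      push_neg at hlt
      have hxr : x < r := by
        rcases lt_or_eq_of_le hx.2 with h | h
        · exact h
        · exfalso; rw [h, hfr] at hlt; exact absurd hlt (lt_irrefl d)
      have : d ∈ Set.Icc (f l) (f x) := ⟨by rw [hfl]; exact hcd, le_of_lt hlt⟩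
      obtain ⟨x', hx', hfx'⟩ := intermediate_value_Icc hx.1 hf.continuousOn this
      have hx'S : x' ∈ S := ⟨⟨hx'.1, (hx'.2.trans hx.2).trans hrq⟩, hfx'⟩
      have : r ≤ x' := csInf_le hSc.bddBelow hx'S
      linarith [hx'.2]
  · have h := intermediate_value_Icc hlr hf.continuousOn
    rw [hfl, hfr] at h
    exact h

lemma pullback (f : ℝ → ℝ) (hf : Continuous f) {a b c d : ℝ} (hcd : c ≤ d)
    (h : Set.Icc c d ⊆ f '' Set.Icc a b) :
    ∃ l r, a ≤ l ∧ l ≤ r ∧ r ≤ b ∧ f '' Set.Icc l r = Set.Icc c d := by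
  obtain ⟨p, hp, hfp⟩ := h (Set.left_mem_Icc.mpr hcd)
  obtain ⟨q, hq, hfq⟩ := h (Set.right_mem_Icc.mpr hcd)
  rcases le_total p q with h1 | h1
  · exact aux_pull f hf hp hq h1 hfp hfq hcd
  · have hg : Continuous (fun x => f (-x)) := hf.comp continuous_neg
    have hp' : -p ∈ Set.Icc (-b) (-a) := ⟨neg_le_neg hp.2, neg_le_neg hp.1⟩
    have hq' : -q ∈ Set.Icc (-b) (-a) := ⟨neg_le_neg hq.2, neg_le_neg hq.1⟩
    obtain ⟨l, r, g1, g2, g3, g4⟩ := aux_pull _ hg hp' hq' (neg_le_neg h1)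
      (by simp [hfp]) (by simp [hfq]) hcd
    refine ⟨-r, -l, by linarith, by linarith, by linarith, ?_⟩
    rw [← g4]
    have : Set.Icc (-r) (-l) = Neg.neg '' Set.Icc l r := by
      ext x
      constructor
      · intro hx; exact ⟨-x, ⟨by linarith [hx.2], by linarith [hx.1]⟩, by ring⟩
      · rintro ⟨w, hw, rfl⟩; exact ⟨by linarith [hw.2], by linarith [hw.1]⟩
    rw [this, Set.image_image]

theorem stmt_15 (f : ℝ → ℝ) (hf : Continuous f) (n : ℕ) (hn : 2 ≤ n)
    (y : ℕ → ℝ)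
    (hcyc : ∀ i < n + 1, f (y i) = y ((i + 1) % (n + 1)))
    (hdist : ∀ i < n + 1, ∀ j < n + 1, y i = y j → i = j)
    (hinc : ∀ i, i + 1 < n + 1 → y i < y (i + 1)) :
    ∃ z : ℕ → ℝ,
      (∀ i < n, f (z i) = z ((i + 1) % n)) ∧
      (∀ i < n, ∀ j < n, z i = z j → i = j) ∧
      (∀ i, i + 1 < n → z i < z (i + 1)) := by
  -- strict monotonicity of y on 0..n
  have hmono : ∀ i j, i < j → j ≤ n → y i < y j := by
    intro i j hij hjn
    have key : ∀ k, i + 1 + k ≤ n → y i < y (i + 1 + k) := by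
      intro k
      induction k with
      | zero => intro h; exact hinc i (by omega)
      | succ k ih =>
        intro h
        have := hinc (i + 1 + k) (by omega)
        have h2 := ih (by omega)
        have e : i + 1 + (k + 1) = (i + 1 + k) + 1 := by omega
        rw [e]; linarith
    have e : j = i + 1 + (j - i - 1) := by omega
    rw [e]; exact key _ (by omega)
  -- iterates along the orbit
  have hiter : ∀ j, j < n + 1 → ∀ m : ℕ, f^[m] (y j) = y ((j + m) % (n + 1)) := by
    intro j hj m
    induction m with
    | zero => simp [Nat.mod_eq_of_lt hj]
    | succ m ih =>
      rw [Function.iterate_succ_apply', ih, hcyc _ (Nat.mod_lt _ (by omega))]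
      congr 1
      rw [Nat.mod_add_mod, Nat.add_assoc]
  -- covering properties
  have cov1 : ∀ i, i + 1 < n →
      Set.Icc (y (i + 1)) (y (i + 2)) ⊆ f '' Set.Icc (y i) (y (i + 1)) := by
    intro i hi
    have h1 : f (y i) = y (i + 1) := by
      rw [hcyc i (by omega), Nat.mod_eq_of_lt (by omega)]
    have h2 : f (y (i + 1)) = y (i + 2) := by
      rw [hcyc (i + 1) (by omega), Nat.mod_eq_of_lt (by omega)]
    have h := intermediate_value_Icc (le_of_lt (hinc i (by omega))) hf.continuousOn
    rwa [h1, h2] at h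
  have covlast : Set.Icc (y 0) (y 1) ⊆ f '' Set.Icc (y (n - 1)) (y n) := by
    have h1 : f (y (n - 1)) = y n := by
      rw [hcyc (n - 1) (by omega)]
      congr 1
      rw [show n - 1 + 1 = n from by omega]
      exact Nat.mod_eq_of_lt (by omega)
    have h2 : f (y n) = y 0 := by
      rw [hcyc n (by omega), Nat.mod_self]
    have h := intermediate_value_Icc' (le_of_lt (hmono (n - 1) n (by omega) le_rfl))
      hf.continuousOn
    rw [h1, h2] at h
    exact Set.Subset.trans
      (Set.Icc_subset_Icc_right (le_of_lt (hmono 1 n (by omega) le_rfl))) h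
  -- backward pullback recursion
  have main : ∀ k, 1 ≤ k → k ≤ n → ∃ l r : ℝ,
      y (n - k) ≤ l ∧ l ≤ r ∧ r ≤ y (n - k + 1) ∧
      f^[k] '' Set.Icc l r = Set.Icc (y 0) (y 1) ∧
      ∀ j, j < k → f^[j] '' Set.Icc l r ⊆ Set.Icc (y (n - k + j)) (y (n - k + j + 1)) := by
    intro k
    induction k with
    | zero => intro h; omega
    | succ k ih =>
      intro _ hk
      by_cases hk1 : k = 0
      · subst hk1
        have hy01 : y 0 ≤ y 1 := le_of_lt (hinc 0 (by omega))
        obtain ⟨l, r, g1, g2, g3, g4⟩ := pullback f hf hy01 covlast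
        refine ⟨l, r, g1, g2, ?_, ?_, ?_⟩
        · rw [show n - 1 + 1 = n from by omega]; exact g3
        · rw [Function.iterate_one]; exact g4
        · intro j hj
          interval_cases j
          simp only [Function.iterate_zero, Set.image_id, Nat.add_zero]
          exact Set.Icc_subset_Icc g1 (by rw [show n - 1 + 1 = n from by omega]; exact g3)
      · have hk0 : 1 ≤ k := by omega
        obtain ⟨l, r, h1, h2, h3, h4, h5⟩ := ih hk0 (by omega)
        have hcov : Set.Icc l r ⊆ f '' Set.Icc (y (n - (k + 1))) (y (n - (k + 1) + 1)) := by
          have hc := cov1 (n - (k + 1)) (by omega)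
          rw [show n - (k + 1) + 1 = n - k from by omega,
            show n - (k + 1) + 2 = n - k + 1 from by omega] at hc
          rw [show n - (k + 1) + 1 = n - k from by omega]
          exact Set.Subset.trans (Set.Icc_subset_Icc h1 h3) hc
        obtain ⟨l', r', g1, g2, g3, g4⟩ := pullback f hf h2 hcov
        refine ⟨l', r', g1, g2, g3, ?_, ?_⟩
        · rw [Function.iterate_succ, Set.image_comp, g4, h4]
        · intro j hj
          cases j with
          | zero =>
            simp only [Function.iterate_zero, Set.image_id, Nat.add_zero]
            exact Set.Icc_subset_Icc g1 g3
          | succ j =>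
            rw [Function.iterate_succ, Set.image_comp, g4,
              show n - (k + 1) + (j + 1) = n - k + j from by omega,
              show n - k + j + 1 = n - k + j + 1 from rfl]
            exact h5 j (by omega)
  obtain ⟨l, r, h1, h2, h3, h4, h5⟩ := main n (by omega) le_rfl
  rw [Nat.sub_self] at h1 h3 h5
  -- fixed point of f^[n]
  have hy01 : y 0 ≤ y 1 := le_of_lt (hinc 0 (by omega))
  have hpmem : y 0 ∈ f^[n] '' Set.Icc l r := by rw [h4]; exact Set.left_mem_Icc.mpr hy01
  have hqmem : y 1 ∈ f^[n] '' Set.Icc l r := by rw [h4]; exact Set.right_mem_Icc.mpr hy01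
  obtain ⟨p, hp, hfp⟩ := hpmem
  obtain ⟨q, hq, hfq⟩ := hqmem
  have hgc : Continuous (fun x => f^[n] x - x) := (hf.iterate n).sub continuous_id
  have hgp : f^[n] p - p ≤ 0 := by
    have : y 0 ≤ p := le_trans (by simpa using h1) hp.1
    rw [hfp]; linarith
  have hgq : 0 ≤ f^[n] q - q := by
    have : q ≤ y 1 := le_trans hq.2 (by simpa using h3)
    rw [hfq]; linarith
  have h0 : (0 : ℝ) ∈ Set.uIcc (f^[n] p - p) (f^[n] q - q) :=
    Set.mem_uIcc.mpr (Or.inl ⟨hgp, hgq⟩)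
  obtain ⟨x, hxm, hx0⟩ := intermediate_value_uIcc (a := p) (b := q)
    (f := fun x => f^[n] x - x) hgc.continuousOn h0
  have hx : f^[n] x = x := by simpa [sub_eq_zero] using hx0
  have hxlr : x ∈ Set.Icc l r := Set.uIcc_subset_Icc hp hq hxm
  -- the new orbit
  set z : ℕ → ℝ := fun i => f^[i] x with hz
  have hzit : ∀ i, i < n → z i ∈ Set.Icc (y i) (y (i + 1)) := by
    intro i hi
    have := h5 i hi (Set.mem_image_of_mem _ hxlr)
    simpa using this
  have hzper : ∀ i, f^[n] (z i) = z i := by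
    intro i
    show f^[n] (f^[i] x) = f^[i] x
    rw [← Function.iterate_add_apply, Nat.add_comm, Function.iterate_add_apply, hx]
  have navoid : ∀ i, i < n → ∀ j, j < n + 1 → z i ≠ y j := by
    intro i hi j hj heq
    have hper : f^[n] (y j) = y j := by rw [← heq]; exact hzper i
    have h2 : f^[n + 1] (y j) = y j := by
      rw [hiter j hj (n + 1)]
      congr 1
      rw [Nat.add_mod_right]
      exact Nat.mod_eq_of_lt hj
    rw [Function.iterate_succ_apply', hper, hcyc j hj] at h2
    have hjj := hdist _ (Nat.mod_lt _ (by omega)) j hj h2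
    by_cases hjn : j = n
    · subst hjn; rw [Nat.mod_self] at hjj; omega
    · rw [Nat.mod_eq_of_lt (by omega)] at hjj; omega
  have hstrict : ∀ i, i + 1 < n → z i < z (i + 1) := by
    intro i hi
    have ha : z i < y (i + 1) :=
      lt_of_le_of_ne (hzit i (by omega)).2 (navoid i (by omega) (i + 1) (by omega))
    have hb : y (i + 1) < z (i + 1) :=
      lt_of_le_of_ne (hzit (i + 1) hi).1 (Ne.symm (navoid (i + 1) hi (i + 1) (by omega)))
    linarith
  have hchain : ∀ i j, i < j → j < n → z i < z j := by
    intro i j hij hjn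
    have key : ∀ k, i + 1 + k < n → z i < z (i + 1 + k) := by
      intro k
      induction k with
      | zero => intro h; exact hstrict i (by omega)
      | succ k ih =>
        intro h
        have := hstrict (i + 1 + k) (by omega)
        have h2 := ih (by omega)
        rw [show i + 1 + (k + 1) = (i + 1 + k) + 1 from by omega]
        linarith
    rw [show j = i + 1 + (j - i - 1) from by omega]
    exact key _ (by omega)
  refine ⟨z, ?_, ?_, hstrict⟩
  · intro i hi
    show f (f^[i] x) = f^[(i + 1) % n] x
    rw [show f (f^[i] x) = f^[i + 1] x from (Function.iterate_succ_apply' f i x).symm]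
    by_cases h : i + 1 = n
    · rw [h, Nat.mod_self, hx, Function.iterate_zero, id]
    · rw [Nat.mod_eq_of_lt (by omega)]
  · intro i hi j hj heq
    rcases lt_trichotomy i j with h | h | h
    · exact absurd heq (ne_of_lt (hchain i j h hj))
    · exact h
    · exact absurd heq.symm (ne_of_lt (hchain j i h hi))
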